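/- If v(θ) = u'(θ)/[u(θ),u'(θ)] where [·,·] denotes the determinant of two plane vectors, then u(θ) = -v'(θ)/[v(θ),v'(θ)]. -/

import Mathlib

open Real

/-- Determinant of two plane vectors. -/
noncomputable def det2 (w₁ w₂ : ℝ × ℝ) : ℝ := w₁.1 * w₂.2 - w₁.2 * w₂.1

lemma dual_aux (p q r : ℝ × ℝ) (hD : det2 p q ≠ 0) (hC : det2 q r ≠ 0) :
    p = -((det2 ((det2 p q)⁻¹ • q) ((det2 p q)⁻¹ • r + (-(det2 p r) / (det2 p q)^2) • q))⁻¹ •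
      ((det2 p q)⁻¹ • r + (-(det2 p r) / (det2 p q)^2) • q)) := by
  obtain ⟨a, b⟩ := p
  obtain ⟨c, d⟩ := q
  obtain ⟨e, f⟩ := r
  simp only [det2] at hD hC ⊢
  have hdet : ((a*d - b*c)⁻¹ • (c,d) : ℝ × ℝ).1 *
      ((a*d - b*c)⁻¹ • ((e,f):ℝ×ℝ) + (-(a*f - b*e) / (a*d - b*c)^2) • ((c,d):ℝ×ℝ)).2 -
      ((a*d - b*c)⁻¹ • ((c,d):ℝ×ℝ)).2 *
      ((a*d - b*c)⁻¹ • ((e,f):ℝ×ℝ) + (-(a*f - b*e) / (a*d - b*c)^2) • ((c,d):ℝ×ℝ)).1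
      = (c*f - d*e) / (a*d - b*c)^2 := by
    simp only [Prod.smul_mk, Prod.mk_add_mk, smul_eq_mul]
    field_simp
    ring
  rw [hdet]
  have h2 : ((a*d - b*c)^2 : ℝ) ≠ 0 := pow_ne_zero 2 hD
  simp only [Prod.smul_mk, Prod.mk_add_mk, smul_eq_mul, Prod.neg_mk, Prod.mk.injEq, inv_div]
  constructor <;> · field_simp; ring

/-- If v = u'/[u,u'], then u = -v'/[v,v']. -/
theorem dual_of_dual (u u' u'' v : ℝ → ℝ × ℝ)
    (hu : ∀ θ, HasDerivAt u (u' θ) θ)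
    (hu' : ∀ θ, HasDerivAt u' (u'' θ) θ)
    (hdet : ∀ θ, 0 < det2 (u θ) (u' θ))
    (hcurv : ∀ θ, 0 < det2 (u' θ) (u'' θ))
    (hv : ∀ θ, v θ = (det2 (u θ) (u' θ))⁻¹ • u' θ) :
    ∀ θ, u θ = -((det2 (v θ) (deriv v θ))⁻¹ • deriv v θ) := by
  intro θ
  set D : ℝ → ℝ := fun t => det2 (u t) (u' t) with hDdef
  have hDne : ∀ t, D t ≠ 0 := fun t => (hdet t).ne'
  have hD : ∀ t, HasDerivAt D (det2 (u t) (u'' t)) t := by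
    intro t
    have h1 : HasDerivAt (fun s => (u s).1) (u' t).1 t := (hu t).fst
    have h2 : HasDerivAt (fun s => (u s).2) (u' t).2 t := (hu t).snd
    have h3 : HasDerivAt (fun s => (u' s).1) (u'' t).1 t := (hu' t).fst
    have h4 : HasDerivAt (fun s => (u' s).2) (u'' t).2 t := (hu' t).snd
    have := (h1.mul h4).sub (h2.mul h3)
    simp only [det2, hDdef]
    refine this.congr_deriv ?_
    ring
  have hvfun : v = fun t => (D t)⁻¹ • u' t := funext hv
  have hvd : HasDerivAt v ((D θ)⁻¹ • u'' θ + (-(det2 (u θ) (u'' θ)) / (D θ)^2) • u' θ) θ := by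
    rw [hvfun]
    exact HasDerivAt.smul ((hD θ).inv (hDne θ)) (hu' θ)
  rw [hvd.deriv, hv θ]
  exact dual_aux (u θ) (u' θ) (u'' θ) (hdet θ).ne' (hcurv θ).ne'
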